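/- A pointed unital quantum B-algebra (X, ≤, →, ⇝, d, u) is weakly involutive if and only if for all x, y: x⁻ ≤ y implies y˜ ≤ x, and x˜ ≤ y implies y⁻ ≤ x. -/
import Mathlib


class QuantumBAlgebra (X : Type*) extends PartialOrder X where
  arr : X → X → X
  sq : X → X → X
  qb1 : ∀ x y z : X, arr y z ≤ arr (arr x y) (arr x z)
  qb2 : ∀ x y z : X, sq y z ≤ arr (sq x y) (sq x z)
  qb3 : ∀ x y z : X, y ≤ z → arr x y ≤ arr x z
  qb4 : ∀ x y z : X, x ≤ arr y z ↔ y ≤ sq x z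

open QuantumBAlgebra

theorem stmt16 {X : Type*} [QuantumBAlgebra X] (d u : X)
    (hu : ∀ x : X, arr u x = x ∧ sq u x = x) :
    (∀ x : X, sq (arr x d) d = x ∧ arr (sq x d) d = x) ↔
    (∀ x y : X, (arr x d ≤ y → sq y d ≤ x) ∧ (sq x d ≤ y → arr y d ≤ x)) := by
  have h1 : ∀ x : X, x ≤ sq (arr x d) d := fun x => (qb4 (arr x d) x d).mp le_rfl
  have h2 : ∀ x : X, x ≤ arr (sq x d) d := fun x => (qb4 x (sq x d) d).mpr le_rfl
  have antA : ∀ a b : X, a ≤ b → arr b d ≤ arr a d := fun a b hab =>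
    (qb4 (arr b d) a d).mpr (le_trans hab (h1 b))
  have antS : ∀ a b : X, a ≤ b → sq b d ≤ sq a d := fun a b hab =>
    (qb4 a (sq b d) d).mp (le_trans hab (h2 b))
  constructor
  · intro hinv x y
    exact ⟨fun h => (hinv x).1 ▸ antS _ _ h, fun h => (hinv x).2 ▸ antA _ _ h⟩
  · intro h x
    exact ⟨le_antisymm ((h x (arr x d)).1 le_rfl) (h1 x),
           le_antisymm ((h x (sq x d)).2 le_rfl) (h2 x)⟩
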